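/- Let $U$ be a unitary operator on a Hilbert space $\mathcal{H}$, and let $\mathcal{K}, \mathcal{K}_+, \mathcal{K}_-$ be closed linear subspaces of $\mathcal{H}$ with $\mathcal{K} \subseteq \mathcal{K}_+ \cap \mathcal{K}_-$, $\dim(\mathcal{K}_+/\mathcal{K}) = \dim(\mathcal{K}_- /\mathcal{K}) = 1$, $U(\mathcal{K}) \subseteq \mathcal{K}_+$, $U^{-1}(\mathcal{K}) \subseteq \mathcal{K}_-$, $U(\mathcal{K}) \not\subseteq \mathcal{K}$, and $U^{-1}(\mathcal{K}) \not\subseteq \mathcal{K}$. Then there exist a unitary operator $V$ on $\mathcal{K}$ and a bounded linear operator $A : \mathcal{K} \to \mathcal{H}$ of rank at most $1$ such that $U|_{\mathcal{K}} = V + A$ (viewing $V$ as a map into $\mathcal{H}$). -/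

import Mathlib

set_option synthInstance.maxHeartbeats 1000000
set_option maxHeartbeats 1600000

local notation "⟪" x ", " y "⟫" => @inner ℂ _ _ x y

lemma aux_hyperplane {H : Type*} [NormedAddCommGroup H] [InnerProductSpace ℂ H] [CompleteSpace H]
    (K Kp : Submodule ℂ H) (hKc : IsClosed (K : Set H)) (hKpc : IsClosed (Kp : Set H))
    (hle : K ≤ Kp) (hdim : Module.finrank ℂ (Kp ⧸ K.comap Kp.subtype) = 1) :
    ∃ e : H, ‖e‖ = 1 ∧ e ∈ Kp ∧ (∀ k ∈ K, ⟪e, k⟫ = 0) ∧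
      ∀ y ∈ Kp, y - ⟪e, y⟫ • e ∈ K := by
  haveI : CompleteSpace Kp := hKpc.completeSpace_coe
  set K' : Submodule ℂ Kp := K.comap Kp.subtype with hK'def
  have hK'c : IsClosed (K' : Set Kp) := hKc.preimage continuous_subtype_val
  haveI : CompleteSpace K' := hK'c.completeSpace_coe
  have hsup : K' ⊔ K'ᗮ = ⊤ := Submodule.sup_orthogonal_of_hasOrthogonalProjection
  let qr : K'ᗮ →ₗ[ℂ] (Kp ⧸ K') := K'.mkQ.comp (K'ᗮ).subtype
  have hinj : Function.Injective qr := by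
    intro a b hab
    have h1 : ((a : Kp) - b) ∈ K' := by
      rwa [← Submodule.Quotient.eq]
    have h2 : ((a : Kp) - b) ∈ K'ᗮ := sub_mem a.2 b.2
    have := (Submodule.mem_inf.2 ⟨h1, h2⟩)
    rw [Submodule.inf_orthogonal_eq_bot, Submodule.mem_bot] at this
    have : (a:Kp) = b := sub_eq_zero.mp this
    exact Subtype.ext this
  have hsurj : Function.Surjective qr := by
    intro y
    obtain ⟨x, rfl⟩ := Submodule.mkQ_surjective K' y
    have hx : x ∈ K' ⊔ K'ᗮ := by rw [hsup]; trivial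
    obtain ⟨a, ha, b, hb, rfl⟩ := Submodule.mem_sup.1 hx
    refine ⟨⟨b, hb⟩, ?_⟩
    simp only [qr, LinearMap.comp_apply, Submodule.subtype_apply]
    rw [Submodule.mkQ_apply, Submodule.mkQ_apply, Submodule.Quotient.eq]
    simpa using ha
  have hfr : Module.finrank ℂ K'ᗮ = 1 := by
    rw [← hdim]
    exact (LinearEquiv.ofBijective qr ⟨hinj, hsurj⟩).finrank_eq
  haveI : FiniteDimensional ℂ K'ᗮ := Module.finite_of_finrank_eq_succ hfr
  haveI : Nontrivial K'ᗮ := Module.nontrivial_of_finrank_pos (R := ℂ) (by omega)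
  obtain ⟨e₀, he₀⟩ := exists_ne (0 : K'ᗮ)
  have hspan : Submodule.span ℂ {e₀} = (⊤ : Submodule ℂ K'ᗮ) := by
    apply Submodule.eq_top_of_finrank_eq
    rw [finrank_span_singleton he₀, hfr]
  have hne : ‖(e₀ : Kp)‖ ≠ 0 := by
    simpa using fun h => he₀ (Subtype.ext (Subtype.ext (by simpa using congrArg Subtype.val h)))
  set n : ℝ := ‖(e₀ : Kp)‖ with hn
  have hn0 : 0 ≤ n := norm_nonneg _
  have hnC : (n : ℂ) ≠ 0 := by exact_mod_cast hne
  set E : H := ((e₀ : Kp) : H) with hE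
  set e : H := (((n:ℂ)⁻¹ • (e₀ : Kp) : Kp) : H) with he
  have hesmul : e = (n:ℂ)⁻¹ • E := rfl
  have hEnorm : ‖E‖ = n := rfl
  have heKp : e ∈ Kp := ((n:ℂ)⁻¹ • (e₀ : Kp) : Kp).2
  have hnorm : ‖e‖ = 1 := by
    rw [hesmul, norm_smul, hEnorm, norm_inv, Complex.norm_real, Real.norm_eq_abs,
      abs_of_nonneg hn0]
    exact inv_mul_cancel₀ hne
  have horthK : ∀ k ∈ K, ⟪e, k⟫ = 0 := by
    intro k hk
    have hk' : (⟨k, hle hk⟩ : Kp) ∈ K' := by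
      simp [hK'def, Submodule.mem_comap, hk]
    have h0 : ⟪(⟨k, hle hk⟩ : Kp), (e₀ : Kp)⟫ = 0 := e₀.2 _ hk'
    have h0' : ⟪k, E⟫ = 0 := (Kp.coe_inner _ _).symm.trans h0
    have hEk : ⟪E, k⟫ = 0 := by
      rw [← inner_conj_symm, h0', map_zero]
    rw [hesmul, inner_smul_left, hEk, mul_zero]
  refine ⟨e, hnorm, heKp, horthK, ?_⟩
  intro y hy
  have hx : (⟨y, hy⟩ : Kp) ∈ K' ⊔ K'ᗮ := by rw [hsup]; trivial
  obtain ⟨a, ha, b, hb, hab⟩ := Submodule.mem_sup.1 hx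
  have hbspan : (⟨b, hb⟩ : K'ᗮ) ∈ Submodule.span ℂ {e₀} := by rw [hspan]; trivial
  obtain ⟨μ, hμ⟩ := Submodule.mem_span_singleton.1 hbspan
  have hbval : (b : H) = μ • E := by
    have := congrArg (fun z : K'ᗮ => ((z : Kp) : H)) hμ
    simpa [hE] using this.symm
  have h2 : (a : H) + (b : H) = y := by
    have := congrArg (fun z : Kp => (z : H)) hab
    simpa using this
  have hyval : y = (a : H) + μ • E := by rw [← hbval]; exact h2.symm
  have haK : (a : H) ∈ K := ha
  have hEE : ⟪E, E⟫ = ((n:ℂ))^2 := by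
    rw [hE, inner_self_eq_norm_sq_to_K, ← hE, hEnorm]
    norm_cast
  have hee : ⟪e, E⟫ = (n : ℂ) := by
    rw [hesmul, inner_smul_left, hEE, map_inv₀, Complex.conj_ofReal, sq]
    rw [← mul_assoc, inv_mul_cancel₀ hnC, one_mul]
  have hey : ⟪e, y⟫ = μ * n := by
    rw [hyval, inner_add_right, horthK _ haK, inner_smul_right, hee, zero_add]
  rw [hey, hyval]
  have hsm : ((μ * n) : ℂ) • e = μ • E := by
    rw [hesmul, smul_smul]
    congr 1
    field_simp
  rw [hsm]
  simpa using haK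

lemma package {H : Type*} [NormedAddCommGroup H] [InnerProductSpace ℂ H]
    (K : Submodule ℂ H) (Ufun : K → H) (u : K) (h : H) (Vlin : K →ₗ[ℂ] K)
    (hn : ∀ x, ‖Vlin x‖ = ‖x‖) (hs : Function.Surjective Vlin)
    (hc : ∀ x : K, Ufun x = (Vlin x : H) + ⟪u, x⟫ • h) :
    ∃ (V : K ≃ₗᵢ[ℂ] K) (A : K →L[ℂ] H),
      Module.rank ℂ (LinearMap.range (A : K →ₗ[ℂ] H)) ≤ 1 ∧
      ∀ x : K, Ufun x = (V x : H) + A x := by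
  let Vli : K →ₗᵢ[ℂ] K := ⟨Vlin, hn⟩
  let V : K ≃ₗᵢ[ℂ] K := LinearIsometryEquiv.ofSurjective Vli hs
  let A : K →L[ℂ] H := (innerSL ℂ u).smulRight h
  have hA : ∀ x : K, A x = ⟪u, x⟫ • h := fun x => rfl
  refine ⟨V, A, ?_, ?_⟩
  · have hle : LinearMap.range (A : K →ₗ[ℂ] H) ≤ Submodule.span ℂ {h} := by
      rintro y ⟨x, rfl⟩
      have : (A : K →ₗ[ℂ] H) x = ⟪u, x⟫ • h := rfl
      rw [this]
      exact Submodule.smul_mem _ _ (Submodule.mem_span_singleton_self h)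
    refine le_trans (Submodule.rank_mono hle) ?_
    refine le_trans (rank_span_le _) ?_
    simp
  · intro x
    have hV : (V x : K) = Vlin x := by
      have := LinearIsometryEquiv.coe_ofSurjective Vli hs
      calc (V x : K) = Vli x := congrFun this x
        _ = Vlin x := rfl
    rw [hV, hA, hc]

theorem stmt_10 {H : Type*} [NormedAddCommGroup H] [InnerProductSpace ℂ H] [CompleteSpace H]
    (U : H ≃ₗᵢ[ℂ] H) (K Kp Km : Submodule ℂ H)
    (hKc : IsClosed (K : Set H)) (hKpc : IsClosed (Kp : Set H)) (hKmc : IsClosed (Km : Set H))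
    (hsub : K ≤ Kp ⊓ Km)
    (hdimp : Module.finrank ℂ (Kp ⧸ K.comap Kp.subtype) = 1)
    (hdimm : Module.finrank ℂ (Km ⧸ K.comap Km.subtype) = 1)
    (hUK : ∀ x ∈ K, U x ∈ Kp) (hUinvK : ∀ x ∈ K, U.symm x ∈ Km)
    (hUKn : ¬ ∀ x ∈ K, U x ∈ K) (hUinvKn : ¬ ∀ x ∈ K, U.symm x ∈ K) :
    ∃ (V : K ≃ₗᵢ[ℂ] K) (A : K →L[ℂ] H),
      Module.rank ℂ (LinearMap.range (A : K →ₗ[ℂ] H)) ≤ 1 ∧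
      ∀ x : K, U (x : H) = (V x : H) + A x := by
  haveI : CompleteSpace K := hKc.completeSpace_coe
  obtain ⟨e, he1, heKp, heK, hedec⟩ :=
    aux_hyperplane K Kp hKc hKpc (hsub.trans inf_le_left) hdimp
  obtain ⟨f, hf1, hfKm, hfK, hfdec⟩ :=
    aux_hyperplane K Km hKc hKmc (hsub.trans inf_le_right) hdimm
  have hTmem : ∀ x : K, U (x : H) - ⟪e, U (x : H)⟫ • e ∈ K :=
    fun x => hedec _ (hUK x x.2)
  have hSmem : ∀ x : K, U.symm (x : H) - ⟪f, U.symm (x : H)⟫ • f ∈ K :=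
    fun x => hfdec _ (hUinvK x x.2)
  set T : K → K := fun x => ⟨U (x : H) - ⟪e, U (x : H)⟫ • e, hTmem x⟩ with hTdef
  set S : K → K := fun x => ⟨U.symm (x : H) - ⟪f, U.symm (x : H)⟫ • f, hSmem x⟩ with hSdef
  set u : K := K.orthogonalProjectionOnto (U.symm e) with hudef
  set v : K := K.orthogonalProjectionOnto (U f) with hvdef
  -- basic inner product facts
  have hu : ∀ x : K, ⟪u, x⟫ = ⟪e, U (x : H)⟫ := by
    intro x
    have h0 : ⟪U.symm e - (u : H), (x : H)⟫ = 0 :=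
      Submodule.starProjection_inner_eq_zero (K := K) (U.symm e) (x : H) x.2
    rw [inner_sub_left, sub_eq_zero] at h0
    rw [Submodule.coe_inner, ← h0, ← U.inner_map_map (U.symm e) (x : H),
      U.apply_symm_apply]
  have hv : ∀ x : K, ⟪v, x⟫ = ⟪f, U.symm (x : H)⟫ := by
    intro x
    have h0 : ⟪U f - (v : H), (x : H)⟫ = 0 :=
      Submodule.starProjection_inner_eq_zero (K := K) (U f) (x : H) x.2
    rw [inner_sub_left, sub_eq_zero] at h0
    rw [Submodule.coe_inner, ← h0, ← U.symm.inner_map_map (U f) (x : H),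
      U.symm_apply_apply]
  have hUdec : ∀ x : K, U (x : H) = (T x : H) + ⟪u, x⟫ • e := by
    intro x
    rw [hu]
    show U (x : H) = (U (x : H) - ⟪e, U (x : H)⟫ • e) + ⟪e, U (x : H)⟫ • e
    abel
  have hUsdec : ∀ x : K, U.symm (x : H) = (S x : H) + ⟪v, x⟫ • f := by
    intro x
    rw [hv]
    show U.symm (x : H) = (U.symm (x : H) - ⟪f, U.symm (x : H)⟫ • f) + ⟪f, U.symm (x : H)⟫ • f
    abel
  have hUy : ∀ x y : K, ⟪U (x : H), (y : H)⟫ = ⟪(x : H), U.symm (y : H)⟫ := by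
    intro x y
    rw [← U.inner_map_map (x : H) (U.symm (y : H)), U.apply_symm_apply]
  have hadj : ∀ x y : K, ⟪T x, y⟫ = ⟪x, S y⟫ := by
    intro x y
    rw [Submodule.coe_inner, Submodule.coe_inner]
    show ⟪U (x : H) - ⟪e, U (x : H)⟫ • e, (y : H)⟫
        = ⟪(x : H), U.symm (y : H) - ⟪f, U.symm (y : H)⟫ • f⟫
    rw [inner_sub_left, inner_sub_right, inner_smul_left, inner_smul_right,
      heK _ y.2, hUy x y]
    have hxf : ⟪(x : H), f⟫ = 0 := by
      rw [← inner_conj_symm, hfK _ x.2, map_zero]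
    simp [hxf]
  have hadj2 : ∀ x y : K, ⟪S x, y⟫ = ⟪x, T y⟫ := by
    intro x y
    rw [← inner_conj_symm, ← hadj y x, inner_conj_symm]
  have P1 : ∀ x y : K, ⟪T x, T y⟫ = ⟪x, y⟫ - ⟪x, u⟫ * ⟪u, y⟫ := by
    intro x y
    rw [Submodule.coe_inner]
    show ⟪U (x : H) - ⟪e, U (x : H)⟫ • e, U (y : H) - ⟪e, U (y : H)⟫ • e⟫
        = ⟪x, y⟫ - ⟪x, u⟫ * ⟪u, y⟫
    have h1 : ⟪U (x : H), U (y : H)⟫ = ⟪x, y⟫ := by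
      rw [U.inner_map_map, Submodule.coe_inner]
    have h2 : ⟪U (x : H), e⟫ = (starRingEnd ℂ) ⟪u, x⟫ := by
      rw [← inner_conj_symm, hu]
    have h3 : ⟪e, e⟫ = 1 := by
      rw [inner_self_eq_norm_sq_to_K, he1]; norm_num
    rw [inner_sub_left, inner_sub_right, inner_sub_right, inner_smul_left,
      inner_smul_right, inner_smul_right, inner_smul_left, h1, h2, h3, ← hu y,
      ← hu x]
    have h4 : ⟪x, u⟫ = (starRingEnd ℂ) ⟪u, x⟫ := by rw [inner_conj_symm]
    rw [h4]
    ring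
  have P2 : ∀ x y : K, ⟪S x, S y⟫ = ⟪x, y⟫ - ⟪x, v⟫ * ⟪v, y⟫ := by
    intro x y
    rw [Submodule.coe_inner]
    show ⟪U.symm (x : H) - ⟪f, U.symm (x : H)⟫ • f, U.symm (y : H) - ⟪f, U.symm (y : H)⟫ • f⟫
        = ⟪x, y⟫ - ⟪x, v⟫ * ⟪v, y⟫
    have h1 : ⟪U.symm (x : H), U.symm (y : H)⟫ = ⟪x, y⟫ := by
      rw [U.symm.inner_map_map, Submodule.coe_inner]
    have h2 : ⟪U.symm (x : H), f⟫ = (starRingEnd ℂ) ⟪v, x⟫ := by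
      rw [← inner_conj_symm, hv]
    have h3 : ⟪f, f⟫ = 1 := by
      rw [inner_self_eq_norm_sq_to_K, hf1]; norm_num
    rw [inner_sub_left, inner_sub_right, inner_sub_right, inner_smul_left,
      inner_smul_right, inner_smul_right, inner_smul_left, h1, h2, h3, ← hv y,
      ← hv x]
    have h4 : ⟪x, v⟫ = (starRingEnd ℂ) ⟪v, x⟫ := by rw [inner_conj_symm]
    rw [h4]
    ring
  -- linearity of T and S
  have hTadd : ∀ x y : K, T (x + y) = T x + T y := by
    intro x y
    apply Subtype.ext
    show U ((x : H) + y) - ⟪e, U ((x : H) + y)⟫ • e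
        = (U (x : H) - ⟪e, U (x : H)⟫ • e) + (U (y : H) - ⟪e, U (y : H)⟫ • e)
    rw [map_add, inner_add_right, add_smul]
    abel
  have hTsmul : ∀ (c : ℂ) (x : K), T (c • x) = c • T x := by
    intro c x
    apply Subtype.ext
    show U (c • (x : H)) - ⟪e, U (c • (x : H))⟫ • e
        = c • (U (x : H) - ⟪e, U (x : H)⟫ • e)
    rw [map_smul, inner_smul_right, smul_sub, smul_smul]
  have hSadd : ∀ x y : K, S (x + y) = S x + S y := by
    intro x y
    apply Subtype.ext
    show U.symm ((x : H) + y) - ⟪f, U.symm ((x : H) + y)⟫ • f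
        = (U.symm (x : H) - ⟪f, U.symm (x : H)⟫ • f) + (U.symm (y : H) - ⟪f, U.symm (y : H)⟫ • f)
    rw [map_add, inner_add_right, add_smul]
    abel
  have hSsmul : ∀ (c : ℂ) (x : K), S (c • x) = c • S x := by
    intro c x
    apply Subtype.ext
    show U.symm (c • (x : H)) - ⟪f, U.symm (c • (x : H))⟫ • f
        = c • (U.symm (x : H) - ⟪f, U.symm (x : H)⟫ • f)
    rw [map_smul, inner_smul_right, smul_sub, smul_smul]
  have hSsub : ∀ x y : K, S (x - y) = S x - S y := by
    intro x y
    have h1 : x - y + y = x := by abel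
    have := hSadd (x - y) y
    rw [h1] at this
    rw [this]; abel
  have hTsub : ∀ x y : K, T (x - y) = T x - T y := by
    intro x y
    have h1 : x - y + y = x := by abel
    have := hTadd (x - y) y
    rw [h1] at this
    rw [this]; abel
  have hST : ∀ x : K, S (T x) = x - ⟪u, x⟫ • u := by
    intro x
    apply ext_inner_right ℂ
    intro y
    rw [hadj2 (T x) y, P1 x y, inner_sub_left, inner_smul_left, inner_conj_symm]
  have hTS : ∀ x : K, T (S x) = x - ⟪v, x⟫ • v := by
    intro x
    apply ext_inner_right ℂ
    intro y
    rw [hadj (S x) y, P2 x y, inner_sub_left, inner_smul_left, inner_conj_symm]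
  -- nontriviality
  have hu0 : u ≠ 0 := by
    intro h
    apply hUKn
    intro x hx
    have hd := hUdec ⟨x, hx⟩
    rw [h, inner_zero_left, zero_smul, add_zero] at hd
    rw [hd]
    exact (T ⟨x, hx⟩).2
  have hv0 : v ≠ 0 := by
    intro h
    apply hUinvKn
    intro x hx
    have hd := hUsdec ⟨x, hx⟩
    rw [h, inner_zero_left, zero_smul, add_zero] at hd
    rw [hd]
    exact (S ⟨x, hx⟩).2
  have hiu : ⟪u, u⟫ = ((‖u‖ : ℝ) : ℂ) ^ 2 := inner_self_eq_norm_sq_to_K u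
  have hiv : ⟪v, v⟫ = ((‖v‖ : ℝ) : ℂ) ^ 2 := inner_self_eq_norm_sq_to_K v
  have hiu0 : ⟪u, u⟫ ≠ 0 := by
    rw [inner_self_ne_zero]; exact hu0
  have hiv0 : ⟪v, v⟫ ≠ 0 := by
    rw [inner_self_ne_zero]; exact hv0
  -- ‖u‖ = ‖v‖
  have hr : ‖u‖ = ‖v‖ := by
    by_contra hne
    have htne : ⟪u, u⟫ ≠ ⟪v, v⟫ := by
      rw [hiu, hiv]
      intro h
      apply hne
      have h2 : (‖u‖ : ℝ) ^ 2 = ‖v‖ ^ 2 := by exact_mod_cast h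
      nlinarith [norm_nonneg u, norm_nonneg v]
    have hTu0 : T u = 0 := by
      have h1 : T (S (T u)) = T u - ⟪u, u⟫ • T u := by
        rw [hST u, hTsub, hTsmul]
      have h2 : T (S (T u)) = T u - ⟪v, T u⟫ • v := hTS (T u)
      have h3 : ⟪v, T u⟫ • v = ⟪u, u⟫ • T u := by
        have h := h1.symm.trans h2
        exact (sub_right_injective h).symm
      have h4 : ⟪v, T u⟫ * ⟪v, v⟫ = ⟪u, u⟫ * ⟪v, T u⟫ := by
        have := congrArg (fun z => ⟪v, z⟫) h3
        simpa [inner_smul_right, mul_comm] using this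
      have h5 : ⟪v, T u⟫ = 0 := by
        by_contra h5
        exact htne (by
          have := mul_right_cancel₀ h5 (by linear_combination h4 : ⟪v, v⟫ * ⟪v, T u⟫ = ⟪u, u⟫ * ⟪v, T u⟫)
          exact this.symm)
      have h6 : ⟪u, u⟫ • T u = 0 := by rw [← h3, h5, zero_smul]
      exact (smul_eq_zero.1 h6).resolve_left hiu0
    have hu1 : ⟪u, u⟫ = 1 := by
      have h7 := hST u
      rw [hTu0] at h7
      have h8 : S 0 = 0 := by
        have := hSsmul 0 u
        simpa using this
      rw [h8] at h7
      have h9 : (1 - ⟪u, u⟫) • u = 0 := by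
        rw [sub_smul, one_smul, ← h7]
      have := (smul_eq_zero.1 h9).resolve_right hu0
      have : ⟪u, u⟫ = 1 := by linear_combination -this
      exact this
    -- symmetric argument for v
    have hSv0 : S v = 0 := by
      have h1 : S (T (S v)) = S v - ⟪v, v⟫ • S v := by
        rw [hTS v, hSsub, hSsmul]
      have h2 : S (T (S v)) = S v - ⟪u, S v⟫ • u := hST (S v)
      have h3 : ⟪u, S v⟫ • u = ⟪v, v⟫ • S v := by
        have h := h1.symm.trans h2
        exact (sub_right_injective h).symm
      have h4 : ⟪u, S v⟫ * ⟪u, u⟫ = ⟪v, v⟫ * ⟪u, S v⟫ := by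
        have := congrArg (fun z => ⟪u, z⟫) h3
        simpa [inner_smul_right, mul_comm] using this
      have h5 : ⟪u, S v⟫ = 0 := by
        by_contra h5
        exact htne (by
          have := mul_right_cancel₀ h5 (by linear_combination h4 : ⟪u, u⟫ * ⟪u, S v⟫ = ⟪v, v⟫ * ⟪u, S v⟫)
          exact this)
      have h6 : ⟪v, v⟫ • S v = 0 := by rw [← h3, h5, zero_smul]
      exact (smul_eq_zero.1 h6).resolve_left hiv0
    have hv1 : ⟪v, v⟫ = 1 := by
      have h7 := hTS v
      rw [hSv0] at h7
      have h8 : T 0 = 0 := by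
        have := hTsmul 0 v
        simpa using this
      rw [h8] at h7
      have h9 : (1 - ⟪v, v⟫) • v = 0 := by
        rw [sub_smul, one_smul, ← h7]
      have := (smul_eq_zero.1 h9).resolve_right hv0
      have : ⟪v, v⟫ = 1 := by linear_combination -this
      exact this
    exact htne (hu1.trans hv1.symm)
  -- ‖u‖ ≤ 1
  have hun0 : 0 < ‖u‖ := norm_pos_iff.2 hu0
  have hule : ‖u‖ ≤ 1 := by
    have h1 : ⟪T u, T u⟫ = ((‖u‖ ^ 2 - ‖u‖ ^ 2 * ‖u‖ ^ 2 : ℝ) : ℂ) := by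
      rw [P1 u u, hiu]
      push_cast
      ring
    have h2 : (0 : ℝ) ≤ ‖u‖ ^ 2 - ‖u‖ ^ 2 * ‖u‖ ^ 2 := by
      have h3 := inner_self_nonneg (𝕜 := ℂ) (x := T u)
      rw [h1] at h3
      simpa only [RCLike.re_to_complex, RCLike.ofReal_re, Complex.ofReal_re] using h3
    nlinarith [hun0, sq_nonneg (‖u‖ - 1), sq_nonneg (‖u‖ + 1)]
  rcases lt_or_eq_of_le hule with hlt | heq
  · -- case ‖u‖ < 1
    set t : ℝ := ‖u‖ ^ 2 with htdef
    have ht0 : 0 < t := by positivity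
    have ht1 : t < 1 := by nlinarith [hlt, hun0]
    have htC : ⟪u, u⟫ = (t : ℂ) := by rw [hiu]; norm_cast
    have htvC : ⟪v, v⟫ = (t : ℂ) := by rw [hiv, ← hr]; norm_cast
    set c : ℝ := Real.sqrt (1 - t) with hcdef
    have hc2 : c ^ 2 = 1 - t := Real.sq_sqrt (by linarith)
    have hc0 : 0 < c := Real.sqrt_pos.2 (by linarith)
    set b : ℝ := (1 - c) / (t * c) with hbdef
    have hbct : b * (t * c) = 1 - c := by
      rw [hbdef]
      exact div_mul_cancel₀ _ (by positivity)
    have hbc : b * c * (1 + c) = 1 := by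
      have h : (b * c * (1 + c)) * t = 1 * t := by
        linear_combination (1 + c) * hbct - hc2
      exact mul_right_cancel₀ (ne_of_gt ht0) h
    have key1 : 2 * b * (1 - t) + b ^ 2 * (t - t ^ 2) = 1 := by
      linear_combination (b * c) * hbct - (2 * b + b ^ 2 * t) * hc2 + hbc
    set b' : ℝ := -(b * c) with hb'def
    have key2 : b + b' + b * b' * t = 0 := by
      rw [hb'def]
      linear_combination (-b) * hbct
    set sr : ℝ := (1 - t)⁻¹ with hsdef
    have hsC : (sr : ℂ) * (1 - (t : ℂ)) = 1 := by
      have h : sr * (1 - t) = 1 := inv_mul_cancel₀ (by linarith)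
      exact_mod_cast h
    have key1C : 2 * (b : ℂ) * (1 - (t : ℂ)) + (b : ℂ) ^ 2 * ((t : ℂ) - (t : ℂ) ^ 2) = 1 := by
      exact_mod_cast key1
    have key2C : (b : ℂ) + (b' : ℂ) + (b : ℂ) * (b' : ℂ) * (t : ℂ) = 0 := by
      exact_mod_cast key2
    set Vlin : K →ₗ[ℂ] K :=
      { toFun := fun x => T x + ((b : ℂ) * ⟪u, x⟫) • T u
        map_add' := by
          intro x y
          rw [hTadd, inner_add_right, mul_add, add_smul]
          abel
        map_smul' := by
          intro a x
          dsimp only [RingHom.id_apply]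
          rw [hTsmul, inner_smul_right, smul_add, smul_smul]
          have h : (b : ℂ) * (a * ⟪u, x⟫) = a * ((b : ℂ) * ⟪u, x⟫) := by ring
          rw [h] } with hVdef
    have hVapp : ∀ x : K, Vlin x = T x + ((b : ℂ) * ⟪u, x⟫) • T u := fun x => rfl
    have hVi : ∀ x : K, ⟪Vlin x, Vlin x⟫ = ⟪x, x⟫ := by
      intro x
      rw [hVapp]
      have expand : ⟪T x + ((b : ℂ) * ⟪u, x⟫) • T u, T x + ((b : ℂ) * ⟪u, x⟫) • T u⟫
          = ⟪T x, T x⟫ + (starRingEnd ℂ) ((b : ℂ) * ⟪u, x⟫) * ⟪T u, T x⟫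
            + ((b : ℂ) * ⟪u, x⟫) * ⟪T x, T u⟫
            + (starRingEnd ℂ) ((b : ℂ) * ⟪u, x⟫) * ((b : ℂ) * ⟪u, x⟫) * ⟪T u, T u⟫ := by
        rw [inner_add_left, inner_add_right, inner_add_right, inner_smul_left,
          inner_smul_right, inner_smul_left, inner_smul_right]
        ring
      rw [expand, P1 x x, P1 u x, P1 x u, P1 u u, htC]
      simp only [map_mul, Complex.conj_ofReal, inner_conj_symm]
      linear_combination (⟪x, u⟫ * ⟪u, x⟫) * key1C
    have hn : ∀ x : K, ‖Vlin x‖ = ‖x‖ := by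
      intro x
      rw [norm_eq_sqrt_re_inner (𝕜 := ℂ) (Vlin x), norm_eq_sqrt_re_inner (𝕜 := ℂ) x, hVi x]
    have hVM : ∀ z : K, Vlin z = T (z + ((b : ℂ) * ⟪u, z⟫) • u) := by
      intro z
      rw [hVapp, hTadd, hTsmul]
    have hMM : ∀ z : K, (z + ((b' : ℂ) * ⟪u, z⟫) • u)
        + ((b : ℂ) * ⟪u, z + ((b' : ℂ) * ⟪u, z⟫) • u⟫) • u = z := by
      intro z
      rw [inner_add_right, inner_smul_right, htC]
      have hsc : ((b' : ℂ) * ⟪u, z⟫) + (b : ℂ) * (⟪u, z⟫ + (b' : ℂ) * ⟪u, z⟫ * (t : ℂ)) = 0 := by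
        linear_combination ⟪u, z⟫ * key2C
      rw [add_assoc, ← add_smul, hsc, zero_smul, add_zero]
    have hTT : ∀ y : K, T (S y + ((sr : ℂ) * ⟪v, y⟫) • S v) = y := by
      intro y
      rw [hTadd, hTsmul, hTS y, hTS v, htvC]
      have h1 : v - (t : ℂ) • v = ((1 : ℂ) - (t : ℂ)) • v := by
        rw [sub_smul, one_smul]
      rw [h1, smul_smul]
      have h2 : (sr : ℂ) * ⟪v, y⟫ * ((1 : ℂ) - (t : ℂ)) = ⟪v, y⟫ := by
        linear_combination ⟪v, y⟫ * hsC
      rw [h2]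
      abel
    have hs : Function.Surjective Vlin := by
      intro y
      refine ⟨(S y + ((sr : ℂ) * ⟪v, y⟫) • S v)
        + ((b' : ℂ) * ⟪u, S y + ((sr : ℂ) * ⟪v, y⟫) • S v⟫) • u, ?_⟩
      rw [hVM, hMM, hTT]
    refine package K (fun x : K => U (x : H)) u (e - (b : ℂ) • ((T u : K) : H)) Vlin hn hs ?_
    intro x
    have hVc : ((Vlin x : K) : H) = ((T x : K) : H) + ((b : ℂ) * ⟪u, x⟫) • ((T u : K) : H) := by
      rw [hVapp]
      push_cast
      ring_nf
    show U (x : H) = ((Vlin x : K) : H) + ⟪u, x⟫ • (e - (b : ℂ) • ((T u : K) : H))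
    rw [hVc, hUdec x]
    module
  · -- case ‖u‖ = 1
    have hu1 : ⟪u, u⟫ = 1 := by rw [hiu, heq]; norm_num
    have hv1 : ⟪v, v⟫ = 1 := by rw [hiv, ← hr, heq]; norm_num
    have hTu0 : T u = 0 := by
      have h : ⟪T u, T u⟫ = 0 := by rw [P1 u u, hu1]; ring
      exact inner_self_eq_zero.1 h
    have hSv0 : S v = 0 := by
      have h : ⟪S v, S v⟫ = 0 := by rw [P2 v v, hv1]; ring
      exact inner_self_eq_zero.1 h
    set Vlin : K →ₗ[ℂ] K :=
      { toFun := fun x => T x + ⟪u, x⟫ • v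
        map_add' := by
          intro x y
          rw [hTadd, inner_add_right, add_smul]
          abel
        map_smul' := by
          intro a x
          dsimp only [RingHom.id_apply]
          rw [hTsmul, inner_smul_right, smul_add, smul_smul] } with hVdef
    have hVapp : ∀ x : K, Vlin x = T x + ⟪u, x⟫ • v := fun x => rfl
    have hVi : ∀ x : K, ⟪Vlin x, Vlin x⟫ = ⟪x, x⟫ := by
      intro x
      rw [hVapp]
      have hTv : ⟪T x, v⟫ = 0 := by rw [hadj x v, hSv0, inner_zero_right]
      have hvT : ⟪v, T x⟫ = 0 := by rw [← inner_conj_symm, hTv, map_zero]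
      have expand : ⟪T x + ⟪u, x⟫ • v, T x + ⟪u, x⟫ • v⟫
          = ⟪T x, T x⟫ + (starRingEnd ℂ) ⟪u, x⟫ * ⟪v, T x⟫
            + ⟪u, x⟫ * ⟪T x, v⟫ + (starRingEnd ℂ) ⟪u, x⟫ * ⟪u, x⟫ * ⟪v, v⟫ := by
        rw [inner_add_left, inner_add_right, inner_add_right, inner_smul_left,
          inner_smul_right, inner_smul_left, inner_smul_right]
        ring
      rw [expand, P1 x x, hTv, hvT, hv1]
      simp only [inner_conj_symm]
      ring
    have hn : ∀ x : K, ‖Vlin x‖ = ‖x‖ := by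
      intro x
      rw [norm_eq_sqrt_re_inner (𝕜 := ℂ) (Vlin x), norm_eq_sqrt_re_inner (𝕜 := ℂ) x, hVi x]
    have hs : Function.Surjective Vlin := by
      intro y
      refine ⟨S y + ⟪v, y⟫ • u, ?_⟩
      rw [hVapp, hTadd, hTsmul, hTu0, hTS y, inner_add_right, inner_smul_right]
      have h1 : ⟪u, S y⟫ = 0 := by
        rw [← inner_conj_symm, hadj2 y u, hTu0, inner_zero_right, map_zero]
      rw [h1, hu1, smul_zero, add_zero, zero_add, mul_one]
      abel
    refine package K (fun x : K => U (x : H)) u (e - (v : H)) Vlin hn hs ?_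
    intro x
    have hVc : ((Vlin x : K) : H) = ((T x : K) : H) + ⟪u, x⟫ • (v : H) := by
      rw [hVapp]
      push_cast
      ring_nf
    show U (x : H) = ((Vlin x : K) : H) + ⟪u, x⟫ • (e - (v : H))
    rw [hVc, hUdec x]
    module
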